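/- Let F be a finitely generated free group with basis f₁,...,fₙ, let α : ℤ → Aut(F), let π : Aut(F) → Out(F) be the quotient map, and let G = F ⋊_α ℤ. If π ∘ α has finite image, then G contains a finite-index subgroup isomorphic to F × ℤ. -/

import Mathlib

open SemidirectProduct

lemma toSubgroup_zmultiples {A : Type*} [AddGroup A] (x : A) :
    AddSubgroup.toSubgroup (AddSubgroup.zmultiples x) =
      Subgroup.zpowers (Multiplicative.ofAdd x) := by
  ext y
  constructor
  · rintro ⟨k, hk⟩
    exact ⟨k, by simpa [← ofAdd_zsmul] using congrArg Multiplicative.ofAdd hk⟩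
  · rintro ⟨k, hk⟩
    exact ⟨k, by simpa [← ofAdd_zsmul] using congrArg Multiplicative.toAdd hk⟩

lemma index_zpowers_ofAdd (a : ℤ) :
    (Subgroup.zpowers (Multiplicative.ofAdd a)).index = a.natAbs := by
  rw [← toSubgroup_zmultiples]
  rw [show (AddSubgroup.toSubgroup (AddSubgroup.zmultiples a)).index
      = (AddSubgroup.zmultiples a).index from rfl]
  exact Int.index_zmultiples a

/-- If `π ∘ α : ℤ → Out(Fₙ)` has finite image (where `π : Aut(Fₙ) → Out(Fₙ)` is the
quotient by the inner automorphisms), then `Fₙ ⋊_α ℤ` contains a finite-index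
subgroup isomorphic to `Fₙ × ℤ`. -/
theorem stmt_9 (n : ℕ) (φ : Multiplicative ℤ →* MulAut (FreeGroup (Fin n)))
    (hfin : (Set.range fun b : Multiplicative ℤ =>
        (QuotientGroup.mk (φ b) :
          MulAut (FreeGroup (Fin n)) ⧸
            (MulAut.conj :
              FreeGroup (Fin n) →* MulAut (FreeGroup (Fin n))).range)).Finite) :
    ∃ K : Subgroup (FreeGroup (Fin n) ⋊[φ] Multiplicative ℤ),
      K.index ≠ 0 ∧ Nonempty (K ≃* FreeGroup (Fin n) × Multiplicative ℤ) := by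
  set F := FreeGroup (Fin n)
  set G := F ⋊[φ] Multiplicative ℤ
  -- find a nontrivial element of the kernel of π ∘ φ
  set f : Multiplicative ℤ → _ := fun b =>
    (QuotientGroup.mk (φ b) :
      MulAut F ⧸ (MulAut.conj : F →* MulAut F).range)
  have : Finite (Set.range f) := hfin.to_subtype
  obtain ⟨a, c, hac, habc⟩ :=
    Finite.exists_ne_map_eq_of_infinite (Set.rangeFactorization f)
  have hfac : f a = f c := congrArg Subtype.val habc
  have hker : (φ a)⁻¹ * φ c ∈ (MulAut.conj : F →* MulAut F).range :=
    QuotientGroup.eq.mp hfac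
  obtain ⟨m, hm⟩ := hker
  set b₀ : Multiplicative ℤ := a⁻¹ * c with hb₀def
  have hb₀ : b₀ ≠ 1 := by
    simp only [hb₀def, Ne, inv_mul_eq_one]
    exact hac
  have hφb₀ : φ b₀ = MulAut.conj m := by
    rw [hb₀def, map_mul, map_inv, hm]
  -- the element z = (m⁻¹, b₀) commutes with all of F
  set z : G := ⟨m⁻¹, b₀⟩ with hzdef
  have hz_right : (rightHom : G →* Multiplicative ℤ) z = b₀ := rfl
  have hcomm : ∀ x : F, Commute (inl x : G) z := by
    intro x
    refine SemidirectProduct.ext ?_ ?_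
    · show x * φ (1 : Multiplicative ℤ) m⁻¹ = m⁻¹ * φ b₀ x
      rw [map_one, hφb₀]
      simp [MulAut.conj_apply, mul_assoc]
      exact (inv_mul_cancel_left m (x * m⁻¹)).symm
    · show (1 : Multiplicative ℤ) * b₀ = b₀ * 1
      rw [one_mul, mul_one]
  -- the homomorphism ψ : F × ℤ → G
  set ψ : F × Multiplicative ℤ →* G :=
    MonoidHom.noncommCoprod (inl : F →* G) (zpowersHom G z)
      (fun x j => by simpa [zpowersHom_apply] using (hcomm x).zpow_right j.toAdd)
    with hψdef
  have hψ_apply : ∀ p : F × Multiplicative ℤ, ψ p = inl p.1 * z ^ p.2.toAdd := by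
    intro p; rfl
  have hright_ψ : ∀ p : F × Multiplicative ℤ,
      (rightHom : G →* Multiplicative ℤ) (ψ p) = b₀ ^ p.2.toAdd := by
    intro p
    rw [hψ_apply, map_mul, map_zpow, rightHom_inl, one_mul, hz_right]
  have hb₀pow : ∀ t : ℤ, b₀ ^ t = 1 → t = 0 := by
    intro t ht
    have : t * b₀.toAdd = 0 := by
      have := congrArg Multiplicative.toAdd ht
      simpa [toAdd_zpow, smul_eq_mul] using this
    rcases mul_eq_zero.mp this with h | h
    · exact h
    · exact absurd (by simpa using congrArg Multiplicative.ofAdd h) hb₀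
  -- ψ is injective
  have hinj : Function.Injective ψ := by
    rw [injective_iff_map_eq_one]
    rintro ⟨x, j⟩ h1
    have hr : b₀ ^ j.toAdd = 1 := by
      rw [← hright_ψ ⟨x, j⟩, h1, map_one]
    have hj : j = 1 := by
      have h0 := hb₀pow _ hr
      simpa using congrArg Multiplicative.ofAdd h0
    have hx : inl x = (1 : G) := by
      have := hψ_apply ⟨x, j⟩
      rw [h1, hj] at this
      simpa using this.symm
    have : x = 1 := inl_injective (by simpa using hx)
    simp [this, hj]
  -- the range of ψ is the preimage of ⟨b₀⟩ under rightHom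
  set K : Subgroup G :=
    Subgroup.comap (rightHom : G →* Multiplicative ℤ) (Subgroup.zpowers b₀) with hKdef
  have hrange : ψ.range = K := by
    apply le_antisymm
    · rintro g ⟨p, rfl⟩
      show (rightHom : G →* Multiplicative ℤ) (ψ p) ∈ Subgroup.zpowers b₀
      rw [hright_ψ]
      exact zpow_mem (Subgroup.mem_zpowers b₀) _
    · intro g hg
      obtain ⟨t, ht⟩ := hg
      refine ⟨⟨g.left * ((z ^ t).left)⁻¹, Multiplicative.ofAdd t⟩, ?_⟩
      rw [hψ_apply]
      simp only [toAdd_ofAdd]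
      refine SemidirectProduct.ext ?_ ?_
      · show g.left * ((z ^ t).left)⁻¹ * φ (1 : Multiplicative ℤ) ((z ^ t).left) = g.left
        rw [map_one]
        simp
        exact inv_mul_cancel_right g.left (z ^ t).left
      · show (1 : Multiplicative ℤ) * (z ^ t).right = g.right
        have h2 : (z ^ t).right = b₀ ^ t := by
          have h := map_zpow (rightHom : G →* Multiplicative ℤ) z t
          rw [hz_right] at h
          exact h
        rw [one_mul, h2]
        exact ht
  refine ⟨K, ?_, ?_⟩
  · rw [hKdef, Subgroup.index_comap_of_surjective _ rightHom_surjective]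
    have : b₀ = Multiplicative.ofAdd b₀.toAdd := rfl
    rw [this, index_zpowers_ofAdd]
    intro h
    exact hb₀ (by simpa using congrArg Multiplicative.ofAdd (Int.natAbs_eq_zero.mp h))
  · exact ⟨(MulEquiv.subgroupCongr hrange.symm).trans (MonoidHom.ofInjective hinj).symm⟩
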